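/- Let C be a smashing triangulated category and A a class of objects closed under extensions and under small coproducts, and closed under either the shift [1] or the shift [-1]. Then A is retraction-closed in C: any retract (direct summand) of an object of A lies in A. -/

import Mathlib

open CategoryTheory Category Limits Pretriangulated ZeroObject Opposite

universe v u u₂ v₂

variable (C : Type u) [Category.{v} C] [Preadditive C] [HasZeroObject C]
  [HasShift C ℤ] [∀ n : ℤ, (CategoryTheory.shiftFunctor C n).Additive] [Pretriangulated C]

/-- `X` is a retract (direct summand) of `Y`. -/
def IsRetract {C : Type u} [Category.{v} C] (X Y : C) : Prop :=
  ∃ (s : X ⟶ Y) (r : Y ⟶ X), s ≫ r = 𝟙 X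

/-- A weight structure on a pretriangulated category `C`, in the homological convention:
`le` is the class `C_{w≤0}` and `ge` is the class `C_{w≥0}`. -/
structure WeightStructure where
  le : Set C
  ge : Set C
  le_retract : ∀ ⦃X Y : C⦄, IsRetract X Y → Y ∈ le → X ∈ le
  ge_retract : ∀ ⦃X Y : C⦄, IsRetract X Y → Y ∈ ge → X ∈ ge
  le_shift : ∀ X : C, X ∈ le → X⟦(-1 : ℤ)⟧ ∈ le
  ge_shift : ∀ X : C, X ∈ ge → X⟦(1 : ℤ)⟧ ∈ ge
  orth : ∀ ⦃X Y : C⦄, X ∈ le → Y ∈ ge → ∀ f : X ⟶ Y⟦(1 : ℤ)⟧, f = 0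
  decomp : ∀ M : C, ∃ (L R : C) (f : L ⟶ M) (g : M ⟶ R) (h : R ⟶ L⟦(1 : ℤ)⟧),
    Triangle.mk f g h ∈ (distTriang C) ∧ L ∈ le ∧ R⟦(-1 : ℤ)⟧ ∈ ge

/-- A t-structure on a pretriangulated category `C`, in the homological convention:
`le` is the class `C_{t≤0}` and `ge` is the class `C_{t≥0}`. -/
structure HomTStructure where
  le : Set C
  ge : Set C
  le_iso : ∀ ⦃X Y : C⦄, (X ≅ Y) → Y ∈ le → X ∈ le
  ge_iso : ∀ ⦃X Y : C⦄, (X ≅ Y) → Y ∈ ge → X ∈ ge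
  le_shift : ∀ X : C, X ∈ le → X⟦(-1 : ℤ)⟧ ∈ le
  ge_shift : ∀ X : C, X ∈ ge → X⟦(1 : ℤ)⟧ ∈ ge
  orth : ∀ ⦃X Y : C⦄, X⟦(-1 : ℤ)⟧ ∈ ge → Y ∈ le → ∀ f : X ⟶ Y, f = 0
  decomp : ∀ M : C, ∃ (L R : C) (f : L ⟶ M) (g : M ⟶ R) (h : R ⟶ L⟦(1 : ℤ)⟧),
    Triangle.mk f g h ∈ (distTriang C) ∧ L ∈ ge ∧ R⟦(1 : ℤ)⟧ ∈ le

/-- A contravariant additive functor is cohomological if it sends distinguished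
triangles to exact sequences. -/
def IsCohomological {A : Type u₂} [Category.{v₂} A] [Abelian A]
    (H : Cᵒᵖ ⥤ A) [H.Additive] : Prop :=
  ∀ (T : Triangle C), ∀ hT : T ∈ distTriang C,
    (ShortComplex.mk (H.map T.mor₂.op) (H.map T.mor₁.op) (by
      rw [← H.map_comp, ← op_comp, comp_distTriang_mor_zero₁₂ _ hT, op_zero, H.map_zero])).Exact

/-- In a smashing triangulated category, a class closed under extensions, coproducts and
one of the shifts [1], [-1] is retraction-closed. -/
theorem retraction_closed_of_ext_coprod_shift [HasCoproducts.{v} C] (A : Set C)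
    (hzero : (0 : C) ∈ A)
    (hext : ∀ (T : Triangle C), T ∈ (distTriang C) → T.obj₁ ∈ A → T.obj₃ ∈ A → T.obj₂ ∈ A)
    (hcoprod : ∀ {ι : Type v} (X : ι → C), (∀ i, X i ∈ A) → (∐ X) ∈ A)
    (hshift : (∀ X ∈ A, X⟦(1 : ℤ)⟧ ∈ A) ∨ (∀ X ∈ A, X⟦(-1 : ℤ)⟧ ∈ A))
    (X Y : C) (h : IsRetract X Y) (hY : Y ∈ A) : X ∈ A := by
  
  classical
  obtain ⟨s, r, hsr⟩ := h
  set e : Y ⟶ Y := r ≫ s with he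
  have hse : s ≫ e = s := by rw [he, ← Category.assoc, hsr, Category.id_comp]
  have her : e ≫ r = r := by rw [he, Category.assoc, hsr, Category.comp_id]
  have hee : e ≫ e = e := by rw [he, ← Category.assoc, Category.assoc r, hsr]; simp [he]
  let F : ULift.{v} ℕ → C := fun _ => Y
  let W : C := ∐ F
  have hW : W ∈ A := hcoprod F (fun _ => hY)
  let ι' : ℕ → (Y ⟶ W) := fun n => Sigma.ι F (ULift.up n)
  let N : W ⟶ W := Sigma.desc (fun j => e ≫ ι' (j.down + 1))
  let Φ : W ⟶ W := 𝟙 W - N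
  let ρ : W ⟶ W := Sigma.desc
    (fun j => (𝟙 Y - e) ≫ ι' j.down - e ≫ ∑ k ∈ Finset.range j.down, ι' k)
  let σ : W ⟶ X := Sigma.desc (fun _ => r)
  let ιX : X ⟶ W := s ≫ ι' 0
  have hιdesc : ∀ (n : ℕ) {Z : C} (f : ULift.{v} ℕ → (Y ⟶ Z)),
      ι' n ≫ Sigma.desc f = f (ULift.up n) := by
    intro n Z f
    simp [ι']
  have hΦ : ∀ n : ℕ, ι' n ≫ Φ = ι' n - e ≫ ι' (n + 1) := by
    intro n
    simp only [Φ, Preadditive.comp_sub, Category.comp_id, N, hιdesc]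
  have hρ : ∀ n : ℕ, ι' n ≫ ρ =
      (𝟙 Y - e) ≫ ι' n - e ≫ ∑ k ∈ Finset.range n, ι' k := by
    intro n
    simp only [ρ, hιdesc]
  have hσ : ∀ n : ℕ, ι' n ≫ σ = r := by
    intro n
    simp only [σ, hιdesc]
  -- the five identities
  have h1 : Φ ≫ ρ = 𝟙 W := by
    have key : ∀ n : ℕ, ι' n ≫ (Φ ≫ ρ) = ι' n ≫ 𝟙 W := by
      intro n
      rw [Category.comp_id, ← Category.assoc, hΦ, Preadditive.sub_comp, Category.assoc,
        hρ, hρ, Finset.sum_range_succ]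
      simp only [Preadditive.sub_comp, Preadditive.comp_sub, Preadditive.comp_add,
        Category.id_comp, ← Category.assoc, hee, Preadditive.add_comp]
      abel
    apply Sigma.hom_ext
    rintro ⟨n⟩
    exact key n
  have h2 : Φ ≫ σ = 0 := by
    have key : ∀ n : ℕ, ι' n ≫ (Φ ≫ σ) = ι' n ≫ 0 := by
      intro n
      rw [← Category.assoc, hΦ, Preadditive.sub_comp, Category.assoc, Category.assoc,
        hσ, hσ, hsr]
      simp
    apply Sigma.hom_ext
    rintro ⟨n⟩
    exact key n
  have h3 : ιX ≫ ρ = 0 := by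
    show (s ≫ ι' 0) ≫ ρ = 0
    rw [Category.assoc, hρ]
    simp [Preadditive.comp_sub, ← Category.assoc, hse]
  have h4 : ιX ≫ σ = 𝟙 X := by
    show (s ≫ ι' 0) ≫ σ = 𝟙 X
    rw [Category.assoc, hσ, hsr]
  have tele : ∀ n : ℕ, e ≫ ∑ k ∈ Finset.range n, (ι' k ≫ Φ)
      = e ≫ ι' 0 - e ≫ ι' n := by
    intro n
    have hk : ∀ k : ℕ, e ≫ (ι' k ≫ Φ) = e ≫ ι' k - e ≫ ι' (k + 1) := by
      intro k
      rw [hΦ, Preadditive.comp_sub, ← Category.assoc, hee]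
    rw [Preadditive.comp_sum]
    simp only [hk]
    exact Finset.sum_range_sub' (fun k => e ≫ ι' k) n
  have h5 : ρ ≫ Φ + σ ≫ ιX = 𝟙 W := by
    have key : ∀ n : ℕ, ι' n ≫ (ρ ≫ Φ + σ ≫ ιX) = ι' n ≫ 𝟙 W := by
      intro n
      have hrιX : r ≫ ιX = e ≫ ι' 0 := by
        show r ≫ s ≫ ι' 0 = e ≫ ι' 0
        rw [he, Category.assoc]
      rw [Category.comp_id, Preadditive.comp_add, ← Category.assoc, ← Category.assoc,
        hρ, hσ, Preadditive.sub_comp, Category.assoc, Category.assoc, hΦ,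
        Preadditive.sum_comp, tele, hrιX]
      simp only [Preadditive.sub_comp, Preadditive.comp_sub, Category.id_comp,
        ← Category.assoc, hee]
      abel
    apply Sigma.hom_ext
    rintro ⟨n⟩
    exact key n
  -- binary bicones
  let b : BinaryBicone X W :=
    { pt := W, fst := σ, snd := ρ, inl := ιX, inr := Φ,
      inl_fst := h4, inl_snd := h3, inr_fst := h2, inr_snd := h1 }
  have hbXW : HasBinaryBiproduct X W :=
    HasBinaryBiproduct.mk ⟨b, isBinaryBilimitOfTotal b (by rw [add_comm]; exact h5)⟩
  let b' : BinaryBicone W X :=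
    { pt := W, fst := ρ, snd := σ, inl := Φ, inr := ιX,
      inl_fst := h1, inl_snd := h2, inr_fst := h3, inr_snd := h4 }
  have hbWX : HasBinaryBiproduct W X :=
    HasBinaryBiproduct.mk ⟨b', isBinaryBilimitOfTotal b' h5⟩
  rcases hshift with hsh | hsh
  · -- shift by 1 : use the triangle (W, W, X) and rotate
    let T₁ : Triangle C := Triangle.mk Φ σ (0 : X ⟶ W⟦(1 : ℤ)⟧)
    have hπ : Φ ≫ biprod.lift ρ σ = biprod.inl := by
      apply biprod.hom_ext <;> simp [h1, h2]
    have hT₁ : T₁ ∈ distTriang C := by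
      refine isomorphic_distinguished _ (binaryBiproductTriangle_distinguished W X) _ ?_
      refine Triangle.isoMk _ _ (Iso.refl _)
        (Iso.mk (biprod.lift ρ σ) (biprod.desc Φ ιX)
          (by exact (biprod.lift_desc (f := ρ) (g := σ) (h := Φ) (i := ιX)).trans h5)
          (by exact (show biprod.desc Φ ιX ≫ biprod.lift ρ σ = 𝟙 (W ⊞ X) by
              apply biprod.hom_ext' <;> apply biprod.hom_ext <;>
              simp [h1, h2, h3, h4])))
        (Iso.refl _) ?_ ?_ ?_
      · exact hπ.trans (Category.id_comp _).symm
      · exact (Category.comp_id _).trans (biprod.lift_snd _ _).symm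
      · exact (zero_comp).trans comp_zero.symm
    exact hext T₁.rotate (rot_of_distTriang _ hT₁) hW (hsh W hW)
  · -- shift by -1 : use the triangle (X, W, W) and inverse rotate
    let T₂ : Triangle C := Triangle.mk ιX ρ (0 : W ⟶ X⟦(1 : ℤ)⟧)
    have hπ : ιX ≫ biprod.lift σ ρ = biprod.inl := by
      apply biprod.hom_ext <;> simp [h3, h4]
    have hT₂ : T₂ ∈ distTriang C := by
      refine isomorphic_distinguished _ (binaryBiproductTriangle_distinguished X W) _ ?_
      refine Triangle.isoMk _ _ (Iso.refl _)
        (Iso.mk (biprod.lift σ ρ) (biprod.desc ιX Φ)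
          (by exact (biprod.lift_desc (f := σ) (g := ρ) (h := ιX) (i := Φ)).trans ((add_comm _ _).trans h5))
          (by exact (show biprod.desc ιX Φ ≫ biprod.lift σ ρ = 𝟙 (X ⊞ W) by
              apply biprod.hom_ext' <;> apply biprod.hom_ext <;>
              simp [h1, h2, h3, h4])))
        (Iso.refl _) ?_ ?_ ?_
      · exact hπ.trans (Category.id_comp _).symm
      · exact (Category.comp_id _).trans (biprod.lift_snd _ _).symm
      · exact (zero_comp).trans comp_zero.symm
    exact hext T₂.invRotate (inv_rot_of_distTriang _ hT₂) (hsh W hW) hW
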